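/- Let n ≥ 1, let p_n(i,j) = 1/(i−j) for i ≠ j and 0 otherwise, and suppose F : ℝ^n ⊗ ℝ^n → ℝ is the linear functional determined by F(e_i ⊗ e_j) = p_n(i,j) for the pairing with the diagonal-with-summing-basis tensor u = ∑_{i=1}^n e_i ⊗ s_i (where s_i = ∑_{j=1}^i e_j). Then F(u) = ∑_{i=1}^n ∑_{j=1}^i p_n(i,j) ≥ (1/2) n log n. -/
import Mathlib


noncomputable def pMat (n : ℕ) : Matrix (Fin n) (Fin n) ℝ :=
  fun i j => if i = j then 0 else 1 / ((i : ℝ) - (j : ℝ))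

private lemma harm_ge_log (m : ℕ) :
    Real.log (m + 1) ≤ ∑ l ∈ Finset.range m, 1 / ((l : ℝ) + 1) := by
  induction m with
  | zero => simp
  | succ m ih =>
    rw [Finset.sum_range_succ]
    have hp1 : (0:ℝ) < (m:ℝ) + 1 := by positivity
    have hp2 : (0:ℝ) < (m:ℝ) + 2 := by positivity
    have h := Real.log_le_sub_one_of_pos (x := ((m:ℝ) + 2) / ((m:ℝ) + 1)) (by positivity)
    rw [Real.log_div (by positivity) (by positivity)] at h
    have h2 : ((m:ℝ) + 2) / ((m:ℝ) + 1) - 1 = 1 / ((m:ℝ) + 1) := by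
      field_simp
      norm_num
    rw [h2] at h
    push_cast
    have e : (m:ℝ) + 1 + 1 = (m:ℝ) + 2 := by ring
    rw [e]
    linarith

private lemma sumlog_ge (n : ℕ) :
    (n : ℝ) / 2 * Real.log n ≤ ∑ i ∈ Finset.range n, Real.log ((i : ℝ) + 1) := by
  rcases Nat.eq_zero_or_pos n with h | h
  · simp [h]
  have hrefl : ∑ i ∈ Finset.range n, Real.log ((n : ℝ) - i)
      = ∑ i ∈ Finset.range n, Real.log ((i : ℝ) + 1) := by
    rw [← Finset.sum_range_reflect (fun i => Real.log ((i : ℝ) + 1)) n]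
    apply Finset.sum_congr rfl
    intro k hk
    rw [Finset.mem_range] at hk
    congr 1
    have hk1 : k + 1 ≤ n := hk
    have : ((n - 1 - k : ℕ) : ℝ) = (n : ℝ) - 1 - k := by
      have : n - 1 - k = n - (k + 1) := by omega
      rw [this, Nat.cast_sub hk1]
      push_cast; ring
    rw [this]; ring
  have key : ∀ i ∈ Finset.range n,
      Real.log n ≤ Real.log ((i : ℝ) + 1) + Real.log ((n : ℝ) - i) := by
    intro i hi
    rw [Finset.mem_range] at hi
    have hi' : (i : ℝ) ≤ (n : ℝ) - 1 := by
      have : (i : ℝ) + 1 ≤ n := by exact_mod_cast hi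
      linarith
    have h1 : (0:ℝ) < (i : ℝ) + 1 := by positivity
    have h2 : (0:ℝ) < (n : ℝ) - i := by linarith
    rw [← Real.log_mul (by positivity) (by positivity)]
    apply Real.log_le_log (by exact_mod_cast h)
    nlinarith [Nat.cast_nonneg (α := ℝ) i]
  have hsum : (n : ℝ) * Real.log n ≤
      ∑ i ∈ Finset.range n, (Real.log ((i : ℝ) + 1) + Real.log ((n : ℝ) - i)) := by
    calc (n : ℝ) * Real.log n = ∑ _i ∈ Finset.range n, Real.log n := by
          rw [Finset.sum_const, Finset.card_range]; ring
      _ ≤ _ := Finset.sum_le_sum key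
  rw [Finset.sum_add_distrib, hrefl] at hsum
  linarith

private lemma inner_eq (n : ℕ) (i : Fin n) :
    ∑ j ∈ Finset.univ.filter (· ≤ i), pMat n i j
      = ∑ l ∈ Finset.range i.val, 1 / ((l : ℝ) + 1) := by
  have step1 : ∑ j ∈ Finset.univ.filter (· ≤ i), pMat n i j
      = ∑ k ∈ Finset.range n,
          (fun k : ℕ => if k ≤ i.val then
            (if i.val = k then 0 else 1 / ((i.val : ℝ) - (k : ℝ))) else 0) k := by
    rw [Finset.sum_filter,
      ← Fin.sum_univ_eq_sum_range
        (fun k : ℕ => if k ≤ i.val then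
          (if i.val = k then 0 else 1 / ((i.val : ℝ) - (k : ℝ))) else 0) n]
    apply Finset.sum_congr rfl
    intro j _
    simp only [pMat, Fin.ext_iff, Fin.le_def]
  rw [step1]
  have step2 : ∑ k ∈ Finset.range (i.val + 1),
      (fun k : ℕ => if k ≤ i.val then
        (if i.val = k then 0 else 1 / ((i.val : ℝ) - (k : ℝ))) else 0) k
      = ∑ k ∈ Finset.range n,
      (fun k : ℕ => if k ≤ i.val then
        (if i.val = k then 0 else 1 / ((i.val : ℝ) - (k : ℝ))) else 0) k := by
    apply Finset.sum_subset
    · exact Finset.range_subset_range.2 i.isLt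
    · intro k _ hk
      rw [Finset.mem_range, not_lt] at hk
      exact if_neg (by omega)
  rw [← step2, Finset.sum_range_succ]
  simp only [le_refl, if_true, if_pos rfl, add_zero]
  rw [← Finset.sum_range_reflect (fun l => 1 / ((l : ℝ) + 1)) i.val]
  apply Finset.sum_congr rfl
  intro k hk
  rw [Finset.mem_range] at hk
  rw [if_pos (le_of_lt hk), if_neg (by omega)]
  have hcast : ((i.val - 1 - k : ℕ) : ℝ) = (i.val : ℝ) - 1 - k := by
    have h1 : i.val - 1 - k = i.val - (k + 1) := by omega
    rw [h1, Nat.cast_sub (by omega)]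
    push_cast; ring
  rw [hcast]
  ring_nf

/-- Evaluating the functional determined by the permuted Hilbert matrix at the
tensor `∑ e_i ⊗ s_i` (`s_i` the summing basis) gives the lower-triangular sum of
`p_n`, which is at least `(1/2) n log n`. -/
theorem hilbert_functional_eval (n : ℕ) (hn : 1 ≤ n)
    (F : (Fin n → ℝ) →ₗ[ℝ] (Fin n → ℝ) →ₗ[ℝ] ℝ)
    (hF : ∀ i j : Fin n, F (Pi.single i 1) (Pi.single j 1) = pMat n i j) :
    (∑ i : Fin n, F (Pi.single i 1) (∑ j ∈ Finset.univ.filter (· ≤ i), Pi.single j 1)) =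
        (∑ i : Fin n, ∑ j ∈ Finset.univ.filter (· ≤ i), pMat n i j) ∧
      (1/2 : ℝ) * n * Real.log n ≤
        ∑ i : Fin n, ∑ j ∈ Finset.univ.filter (· ≤ i), pMat n i j := by
  constructor
  · apply Finset.sum_congr rfl
    intro i _
    rw [map_sum]
    exact Finset.sum_congr rfl fun j _ => hF i j
  · have h1 : ∀ i : Fin n, Real.log ((i.val : ℝ) + 1)
        ≤ ∑ j ∈ Finset.univ.filter (· ≤ i), pMat n i j := by
      intro i
      rw [inner_eq]
      exact_mod_cast harm_ge_log i.val
    calc (1/2 : ℝ) * n * Real.log n = (n : ℝ) / 2 * Real.log n := by ring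
      _ ≤ ∑ k ∈ Finset.range n, Real.log ((k : ℝ) + 1) := sumlog_ge n
      _ = ∑ i : Fin n, Real.log ((i.val : ℝ) + 1) :=
          (Fin.sum_univ_eq_sum_range (fun k => Real.log ((k : ℝ) + 1)) n).symm
      _ ≤ _ := Finset.sum_le_sum fun i _ => h1 i
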